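/- Let G be a digraph, b ∈ ℕ^V an upper bound vector, and x a chip-distribution. A legal game with upper bound b is a legal game in which each vertex v is fired at most b(v) times; it is maximal if it cannot be extended by any firing that is both legal and respects the bound. Then any two maximal legal games with upper bound b from initial distribution x have the same firing vector. -/

import Mathlib

namespace ChipFiring

variable {V : Type*}

/-- Out-degree of a vertex: total multiplicity of edges leaving `v`. -/
def outdeg [Fintype V] (d : V → V → ℕ) (v : V) : ℕ := ∑ u, d v u

/-- In-degree of a vertex: total multiplicity of edges entering `v`. -/
def indeg [Fintype V] (d : V → V → ℕ) (v : V) : ℕ := ∑ u, d u v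

/-- A digraph (multiplicity function) has no loops. -/
def Loopless (d : V → V → ℕ) : Prop := ∀ v, d v v = 0

/-- Weak connectivity: each pair of vertices is joined by an undirected walk. -/
def WeaklyConnected (d : V → V → ℕ) : Prop :=
  ∀ u v : V, Relation.ReflTransGen (fun a b => d a b ≠ 0 ∨ d b a ≠ 0) u v

/-- Strong connectivity: each ordered pair of vertices is joined by a directed walk. -/
def StronglyConnected (d : V → V → ℕ) : Prop :=
  ∀ u v : V, Relation.ReflTransGen (fun a b => d a b ≠ 0) u v

/-- Eulerian: out-degree equals in-degree at each vertex. -/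
def Eulerian [Fintype V] (d : V → V → ℕ) : Prop := ∀ v, outdeg d v = indeg d v

/-- The Laplacian matrix: `L(u,u) = -d⁺(u)`, and `L(u,v) = d(v,u)` for `u ≠ v`. -/
def laplacian [Fintype V] [DecidableEq V] (d : V → V → ℕ) : Matrix V V ℤ :=
  fun u v => if u = v then -(outdeg d v : ℤ) else (d v u : ℤ)

/-- Firing vertex `v`: `v` sends one chip along each outgoing edge. -/
def fire [Fintype V] [DecidableEq V] (d : V → V → ℕ) (x : V → ℕ) (v : V) : V → ℕ :=
  fun u => if u = v then x v - outdeg d v else x u + d v u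

/-- `LegalSeq d x α` : the sequence of firings `α` is legal from initial distribution `x`. -/
def LegalSeq [Fintype V] [DecidableEq V] (d : V → V → ℕ) : (V → ℕ) → List V → Prop
  | _, [] => True
  | x, v :: rest => outdeg d v ≤ x v ∧ LegalSeq d (fire d x v) rest

/-- The chip-distribution obtained from `x` after performing the firings `α`. -/
def runGame [Fintype V] [DecidableEq V] (d : V → V → ℕ) : (V → ℕ) → List V → (V → ℕ)
  | x, [] => x
  | x, v :: rest => runGame d (fire d x v) rest

/-- The firing vector of a game: how many times each vertex is fired. -/
def firingVector [DecidableEq V] (α : List V) : V → ℕ := fun v => α.count v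

/-- `x ⤳ y` : some legal game transforms `x` into `y`. -/
def Reaches [Fintype V] [DecidableEq V] (d : V → V → ℕ) (x y : V → ℕ) : Prop :=
  ∃ α : List V, LegalSeq d x α ∧ runGame d x α = y

/-- A period vector: a nonnegative integer vector in the kernel of the Laplacian. -/
def PeriodVector [Fintype V] [DecidableEq V] (d : V → V → ℕ) (p : V → ℕ) : Prop :=
  (laplacian d).mulVec (fun v => (p v : ℤ)) = 0

/-- A vector `f ∈ ℕ^V` is reduced if `f ≥ p` fails for every nonzero period vector `p`. -/
def Reduced [Fintype V] [DecidableEq V] (d : V → V → ℕ) (f : V → ℕ) : Prop :=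
  ∀ p : V → ℕ, PeriodVector d p → p ≠ 0 → ¬ (∀ v, p v ≤ f v)

/-- A distribution is recurrent if a nonempty legal game transforms it back to itself. -/
def Recurrent [Fintype V] [DecidableEq V] (d : V → V → ℕ) (x : V → ℕ) : Prop :=
  ∃ α : List V, α ≠ [] ∧ LegalSeq d x α ∧ runGame d x α = x

/-- Linear equivalence: `x = y + Lz` for some integer vector `z`. -/
def LinEquiv [Fintype V] [DecidableEq V] (d : V → V → ℕ) (x y : V → ℕ) : Prop :=
  ∃ z : V → ℤ, ∀ v, (x v : ℤ) = (y v : ℤ) + (laplacian d).mulVec z v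

/-- `x` is non-terminating: there is an infinite sequence of legal firings from `x`. -/
def NonTerminating [Fintype V] [DecidableEq V] (d : V → V → ℕ) (x : V → ℕ) : Prop :=
  ∃ s : ℕ → V, ∀ n : ℕ, LegalSeq d x (List.ofFn (fun i : Fin n => s i))

end ChipFiring

namespace ChipFiring

lemma legalSeq_append {V : Type*} [Fintype V] [DecidableEq V] (d : V → V → ℕ)
    (x : V → ℕ) (γ : List V) (v : V) :
    LegalSeq d x (γ ++ [v]) ↔ LegalSeq d x γ ∧ outdeg d v ≤ runGame d x γ v := by
  induction γ generalizing x with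
  | nil => simp [LegalSeq, runGame]
  | cons a γ ih => simp [LegalSeq, runGame, ih, and_assoc]

lemma runGame_count {V : Type*} [Fintype V] [DecidableEq V] (d : V → V → ℕ)
    (hloop : Loopless d) (x : V → ℕ) (α : List V) (h : LegalSeq d x α) (v : V) :
    (runGame d x α v : ℤ) = (x v : ℤ) + ∑ u, (d u v : ℤ) * α.count u
      - (outdeg d v : ℤ) * α.count v := by
  induction α generalizing x with
  | nil => simp [runGame]
  | cons a α ih =>
    obtain ⟨ha, hrest⟩ := h
    rw [runGame, ih (fire d x a) hrest]
    have hfire : ((fire d x a v : ℕ) : ℤ)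
        = (x v : ℤ) + d a v - (if v = a then (outdeg d a : ℤ) else 0) := by
      unfold fire
      by_cases hva : v = a
      · subst hva
        simp [hloop v, Nat.cast_sub ha]
      · simp [hva]
    have hcount : ∀ u : V, ((a :: α).count u : ℤ)
        = α.count u + (if u = a then 1 else 0) := by
      intro u
      by_cases hu : u = a <;> simp [List.count_cons, hu] <;> exact Ne.symm hu
    have hsum : ∑ u, (d u v : ℤ) * (a :: α).count u
        = (∑ u, (d u v : ℤ) * α.count u) + d a v := by
      calc ∑ u, (d u v : ℤ) * (a :: α).count u
          = ∑ u, ((d u v : ℤ) * α.count u + if u = a then (d u v : ℤ) else 0) := by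
            refine Finset.sum_congr rfl fun u _ => ?_
            rw [hcount u]; by_cases hu : u = a <;> simp [hu] <;> ring
        _ = (∑ u, (d u v : ℤ) * α.count u) + d a v := by
            rw [Finset.sum_add_distrib, Finset.sum_ite_eq' Finset.univ a fun u => (d u v : ℤ)]
            simp
    rw [hfire, hsum, hcount v]
    by_cases hva : v = a <;> simp [hva] <;> ring

lemma count_le_of_max {V : Type*} [Fintype V] [DecidableEq V] (d : V → V → ℕ)
    (hloop : Loopless d) (b x : V → ℕ) (β : List V)
    (hβ : LegalSeq d x β)
    (hβmax : ¬ ∃ v, outdeg d v ≤ runGame d x β v ∧ β.count v < b v) :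
    ∀ α : List V, LegalSeq d x α → (∀ v, α.count v ≤ b v) →
      ∀ v, α.count v ≤ β.count v := by
  intro α
  induction α using List.reverseRecOn with
  | nil => simp
  | append_singleton γ w ih =>
    intro hα hαb v
    rw [legalSeq_append] at hα
    obtain ⟨hγ, hw⟩ := hα
    have hγb : ∀ u, γ.count u ≤ b u := by
      intro u
      refine le_trans ?_ (hαb u)
      simp [List.count_append]
    have hIH : ∀ u, γ.count u ≤ β.count u := ih hγ hγb
    by_cases hvw : v = w
    · subst hvw
      by_contra hcon
      push_neg at hcon
      have hcv : (γ ++ [v]).count v = γ.count v + 1 := by simp [List.count_append]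
      rw [hcv] at hcon
      have heq : β.count v = γ.count v := le_antisymm (by omega) (hIH v)
      have h1 := runGame_count d hloop x β hβ v
      have h2 := runGame_count d hloop x γ hγ v
      have hsum : ∑ u, (d u v : ℤ) * γ.count u ≤ ∑ u, (d u v : ℤ) * β.count u := by
        refine Finset.sum_le_sum fun u _ => ?_
        have h := hIH u
        exact mul_le_mul_of_nonneg_left (by exact_mod_cast h) (by positivity)
      have hle : (runGame d x γ v : ℤ) ≤ runGame d x β v := by
        rw [h1, h2, heq]
        linarith
      have hlegal : outdeg d v ≤ runGame d x β v := by
        have : (outdeg d v : ℤ) ≤ runGame d x β v :=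
          le_trans (by exact_mod_cast hw) hle
        exact_mod_cast this
      have hbv := hαb v
      rw [hcv] at hbv
      exact hβmax ⟨v, hlegal, by omega⟩
    · have : (γ ++ [w]).count v = γ.count v := by simp [List.count_append, hvw, Ne.symm hvw, List.count_singleton]
      rw [this]
      exact hIH v

/-- Any two maximal legal games with upper bound `b` from initial
distribution `x` have the same firing vector. -/
theorem bounded_abelian_property {V : Type*} [Fintype V] [DecidableEq V] (d : V → V → ℕ)
    (hloop : Loopless d) (hconn : WeaklyConnected d) (b x : V → ℕ) (α β : List V)
    (hα : LegalSeq d x α) (hαb : ∀ v, α.count v ≤ b v)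
    (hβ : LegalSeq d x β) (hβb : ∀ v, β.count v ≤ b v)
    (hαmax : ¬ ∃ v, outdeg d v ≤ runGame d x α v ∧ α.count v < b v)
    (hβmax : ¬ ∃ v, outdeg d v ≤ runGame d x β v ∧ β.count v < b v) :
    firingVector α = firingVector β := by
  funext v
  exact le_antisymm
    (count_le_of_max d hloop b x β hβ hβmax α hα hαb v)
    (count_le_of_max d hloop b x α hα hαmax β hβ hβb v)

end ChipFiring
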